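/- Let X ⊆ I^∞ be compact and nonempty, let (m_i) be a strictly increasing sequence in ℕ, let M_i ⊆ I^{m_i} be nonempty compact sets, and let h_i : M_{i+1} → M_i be continuous maps such that ρ(h_i(u), p_{m_i,∞}(u)) < 2^{-m_i} for all u ∈ M_{i+1} (points of M_i viewed in I^∞ via the identification I^{m_i} ⊆ I^∞). Suppose there are η_i > 0 with η_i → 0 such that M_i ⊆ N(X, η_i) for every i (as subsets of I^∞). Let M = lim (M_i, h_i). Then: (1) for every thread w = (a_1, a_2, …) ∈ M, ρ(a_i, a_{i+1}) < 2^{1−m_i} for all i, so (a_i) is a Cauchy sequence in (I^∞, ρ) whose limit lies in X; and (2) the function π : M → I^∞ sending each thread to the limit of its associated sequence is continuous, with π(M) ⊆ X. -/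

import Mathlib

open Set Filter Topology

noncomputable section

set_option maxHeartbeats 1000000

/-- The Hilbert cube `I^∞ = ∏_{i ≥ 1} [0,1]`; the index `i : ℕ` represents coordinate `i + 1`. -/
abbrev Iinf : Type := ℕ → unitInterval

/-- The metric `ρ(x, y) = Σ_{i=1}^∞ |x_i − y_i| / 2^i` on the Hilbert cube (whose topology is
the product topology carried by `Iinf`). -/
def rho (x y : Iinf) : ℝ := ∑' i : ℕ, |((x i : ℝ)) - (y i : ℝ)| / 2 ^ (i + 1)

/-- `I^k`, identified with the subset `I^k × {0}` of `I^∞` (all coordinates beyond `k` zero). -/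
def cubeFin (k : ℕ) : Set Iinf := {x | ∀ i, k ≤ i → x i = 0}

/-- `p_{k,∞} : I^∞ → I^k`, projection to the first `k` coordinates.  For `j ≤ k` it also
serves as `p_j^k : I^k → I^j`. -/
def proj (k : ℕ) (x : Iinf) : Iinf := fun i => if i < k then x i else 0

/-- `P × I^∞_k = {x ∈ I^∞ : p_{k,∞}(x) ∈ P}`, for `P ⊆ I^k`. -/
def cyl (k : ℕ) (P : Set Iinf) : Set Iinf := {x | proj k x ∈ P}

/-- `N(A, ε)`, the open `ε`-neighborhood of `A` in `(I^∞, ρ)`. -/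
def nbhd (A : Set Iinf) (ε : ℝ) : Set Iinf := {x | ∃ a ∈ A, rho x a < ε}

/-- The interior of `P` relative to the subspace `I^m ⊆ I^∞`. -/
def relInterior (m : ℕ) (P : Set Iinf) : Set Iinf :=
  {x ∈ cubeFin m | ∃ U : Set Iinf, IsOpen U ∧ x ∈ U ∧ U ∩ cubeFin m ⊆ P}

lemma uabs_le (a b : unitInterval) : |(a:ℝ) - b| ≤ 1 := by
  obtain ⟨ha0, ha1⟩ := a.2; obtain ⟨hb0, hb1⟩ := b.2
  rw [abs_le]; constructor <;> linarith

lemma rho_term_nonneg (x y : Iinf) (i : ℕ) : 0 ≤ |((x i:ℝ)) - (y i:ℝ)| / 2^(i+1) :=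
  div_nonneg (abs_nonneg _) (by positivity)

lemma rho_term_le (x y : Iinf) (i : ℕ) :
    |((x i:ℝ)) - (y i:ℝ)| / 2^(i+1) ≤ (1/2:ℝ)^(i+1) := by
  rw [one_div_pow, div_le_div_iff₀ (by positivity) (by positivity), one_mul]
  calc |((x i:ℝ)) - (y i:ℝ)| * 2^(i+1) ≤ 1 * 2^(i+1) := by
        have := uabs_le (x i) (y i); nlinarith [pow_pos (two_pos (α := ℝ)) (i+1)]
    _ = 2^(i+1) := one_mul _

lemma summable_half_succ : Summable (fun i : ℕ => (1/2:ℝ)^(i+1)) := by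
  simpa [pow_succ] using summable_geometric_two.mul_right (1/2:ℝ)

lemma rho_summable (x y : Iinf) :
    Summable (fun i => |((x i:ℝ)) - (y i:ℝ)| / 2^(i+1)) :=
  Summable.of_nonneg_of_le (rho_term_nonneg x y) (rho_term_le x y) summable_half_succ

lemma rho_nonneg (x y : Iinf) : 0 ≤ rho x y :=
  tsum_nonneg (rho_term_nonneg x y)

lemma rho_symm (x y : Iinf) : rho x y = rho y x := by
  unfold rho; exact tsum_congr fun i => by rw [abs_sub_comm]

lemma rho_self (x : Iinf) : rho x x = 0 := by
  simp [rho]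

lemma rho_triangle (x y z : Iinf) : rho x z ≤ rho x y + rho y z := by
  rw [rho, rho, rho, ← Summable.tsum_add (rho_summable x y) (rho_summable y z)]
  refine Summable.tsum_le_tsum (fun i => ?_) (rho_summable x z)
    ((rho_summable x y).add (rho_summable y z))
  rw [← add_div]
  exact div_le_div_of_nonneg_right (abs_sub_le _ _ _) (by positivity)

lemma coord_le_rho (x y : Iinf) (j : ℕ) :
    |((x j:ℝ)) - (y j:ℝ)| ≤ 2^(j+1) * rho x y := by
  have h1 := Summable.le_tsum (rho_summable x y) j (fun i _ => rho_term_nonneg x y i)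
  rw [div_le_iff₀ (by positivity)] at h1
  unfold rho
  linarith

lemma tsum_half_shift (k : ℕ) : ∑' i : ℕ, (1/2:ℝ)^(i+k+1) = (1/2)^k := by
  have h0 : ∀ i : ℕ, (1/2:ℝ)^(i+k+1) = (1/2)^(i+1) * (1/2)^k := by
    intro i; rw [← pow_add]; ring_nf
  have h1 : ∑' i : ℕ, (1/2:ℝ)^(i+1) = 1 := by
    have h2 : ∑' i : ℕ, (1/2:ℝ)^i * (1/2) = 2 * (1/2 : ℝ) := by
      rw [tsum_mul_right, tsum_geometric_two]
    simpa [pow_succ] using h2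
  calc ∑' i : ℕ, (1/2:ℝ)^(i+k+1) = ∑' i : ℕ, (1/2:ℝ)^(i+1) * (1/2)^k := tsum_congr h0
    _ = (∑' i : ℕ, (1/2:ℝ)^(i+1)) * (1/2)^k := tsum_mul_right
    _ = (1/2:ℝ)^k := by rw [h1, one_mul]

lemma rho_eq_below_le (x y : Iinf) (k : ℕ) (hxy : ∀ i, i < k → x i = y i) :
    rho x y ≤ 1 / 2^k := by
  have hs := rho_summable x y
  have hsplit := (Summable.sum_add_tsum_nat_add (f := fun i => |((x i:ℝ)) - (y i:ℝ)| / 2^(i+1)) k hs).symm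
  have h1 : ∑ i ∈ Finset.range k, |((x i:ℝ)) - (y i:ℝ)| / 2^(i+1) = 0 := by
    apply Finset.sum_eq_zero
    intro i hi
    rw [hxy i (Finset.mem_range.mp hi)]; simp
  have h2 : ∑' i : ℕ, |((x (i+k):ℝ)) - (y (i+k):ℝ)| / 2^(i+k+1) ≤ (1/2:ℝ)^k := by
    rw [← tsum_half_shift k]
    exact Summable.tsum_le_tsum (fun i => rho_term_le x y (i+k))
      ((summable_nat_add_iff k).mpr hs) ((summable_nat_add_iff k).mpr summable_half_succ)
  have hr : rho x y = ∑' i : ℕ, |((x (i+k):ℝ)) - (y (i+k):ℝ)| / 2^(i+k+1) := by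
    rw [rho, hsplit, h1, zero_add]
  rw [hr]
  calc _ ≤ (1/2:ℝ)^k := h2
    _ = 1/2^k := one_div_pow _ _

/-- Let `X ⊆ I^∞` be compact nonempty, `(m_i)` strictly increasing,
`M_i ⊆ I^{m_i}` nonempty compact with `M_i ⊆ N(X, η_i)` where `η_i → 0`, and
`h_i : M_{i+1} → M_i` continuous with `ρ(h_i u, p_{m_i,∞} u) < 2^{-m_i}`.  Let
`M = lim (M_i, h_i)`.  Then (1) for every thread `w = (a_i) ∈ M` one has
`ρ(a_i, a_{i+1}) < 2^{1 − m_i}`, so `(a_i)` is `ρ`-Cauchy and converges to a point of `X`;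
and (2) the map `π : M → I^∞` sending a thread to the limit of its associated sequence is
continuous with `π(M) ⊆ X`. -/
theorem thread_limits_lie_in_X
    (X : Set Iinf) (hXne : X.Nonempty) (hXc : IsCompact X)
    (m : ℕ → ℕ) (hm : StrictMono m)
    (M : ℕ → Set Iinf) (hMne : ∀ i, (M i).Nonempty) (hMc : ∀ i, IsCompact (M i))
    (hMcube : ∀ i, M i ⊆ cubeFin (m i))
    (η : ℕ → ℝ) (hη : ∀ i, 0 < η i) (hη0 : Tendsto η atTop (𝓝 0))
    (hMX : ∀ i, M i ⊆ nbhd X (η i))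
    (h : ∀ i, M (i + 1) → Iinf) (hhc : ∀ i, Continuous (h i))
    (hhmem : ∀ i u, h i u ∈ M i)
    (hhclose : ∀ i (u : M (i + 1)), rho (h i u) (proj (m i) (u : Iinf)) < 1 / 2 ^ m i) :
    (∀ w : {a : ∀ i, M i // ∀ i, h i (a (i + 1)) = (a i : Iinf)},
      (∀ i, rho (w.1 i : Iinf) (w.1 (i + 1) : Iinf) < 2 / 2 ^ m i) ∧
      (∀ ε : ℝ, 0 < ε → ∃ N : ℕ, ∀ p, N ≤ p → ∀ q, N ≤ q →
        rho (w.1 p : Iinf) (w.1 q : Iinf) < ε) ∧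
      ∃ l ∈ X, Tendsto (fun i => (w.1 i : Iinf)) atTop (𝓝 l)) ∧
    ∃ π : {a : ∀ i, M i // ∀ i, h i (a (i + 1)) = (a i : Iinf)} → Iinf,
      Continuous π ∧
      (∀ w, Tendsto (fun i => (w.1 i : Iinf)) atTop (𝓝 (π w))) ∧
      ∀ w, π w ∈ X := by
  classical
  -- step 1 : consecutive threads are close
  have step1 : ∀ w : {a : ∀ i, M i // ∀ i, h i (a (i + 1)) = (a i : Iinf)}, ∀ i,
      rho (w.1 i : Iinf) (w.1 (i + 1) : Iinf) < 2 / 2 ^ m i := by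
    intro w i
    have hcl : rho ((w.1 i : Iinf)) (proj (m i) ((w.1 (i+1) : Iinf))) < 1 / 2 ^ m i := by
      have hc := hhclose i (w.1 (i+1))
      rwa [w.2 i] at hc
    have htail : rho (proj (m i) ((w.1 (i+1) : Iinf))) ((w.1 (i+1) : Iinf)) ≤ 1 / 2 ^ m i := by
      apply rho_eq_below_le
      intro j hj
      simp [proj, hj]
    have ht := rho_triangle ((w.1 i : Iinf)) (proj (m i) ((w.1 (i+1) : Iinf)))
      ((w.1 (i+1) : Iinf))
    have h2 : (2:ℝ) / 2 ^ m i = 1/2^(m i) + 1/2^(m i) := by ring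
    rw [h2]
    linarith
  have hpow_le : ∀ q : ℕ, (2:ℝ)/2^(m q) ≤ 2/2^q := by
    intro q
    gcongr
    · norm_num
    · exact hm.le_apply
  have step2 : ∀ w : {a : ∀ i, M i // ∀ i, h i (a (i + 1)) = (a i : Iinf)}, ∀ p q, p ≤ q →
      rho (w.1 p : Iinf) (w.1 q : Iinf) ≤ 4/2^p - 4/2^q := by
    intro w p q hpq
    induction q, hpq using Nat.le_induction with
    | base => rw [rho_self]; simp
    | succ q hq ih =>
      have h1 := step1 w q
      have h2 := hpow_le q
      have ht := rho_triangle (w.1 p : Iinf) (w.1 q : Iinf) (w.1 (q+1) : Iinf)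
      have h3 : (4:ℝ)/2^(q+1) = 2/2^q := by rw [pow_succ]; ring
      have h4 : (4:ℝ)/2^q = 2/2^q + 2/2^q := by ring
      linarith
  have step3 : ∀ w : {a : ∀ i, M i // ∀ i, h i (a (i + 1)) = (a i : Iinf)}, ∀ p q, p ≤ q →
      rho (w.1 p : Iinf) (w.1 q : Iinf) ≤ 4/2^p := by
    intro w p q hpq
    have h1 := step2 w p q hpq
    have h4 : (0:ℝ) < 4/2^q := by positivity
    linarith
  have h4pow : Tendsto (fun p : ℕ => (4:ℝ)/2^p) atTop (𝓝 0) :=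
    tendsto_const_nhds.div_atTop (tendsto_pow_atTop_atTop_of_one_lt one_lt_two)
  -- key : every thread converges to a point of X, with uniform rate
  have key : ∀ w : {a : ∀ i, M i // ∀ i, h i (a (i + 1)) = (a i : Iinf)},
      ∃ l : Iinf, l ∈ X ∧ Tendsto (fun i => (w.1 i : Iinf)) atTop (𝓝 l) ∧
        ∀ p, rho l (w.1 p : Iinf) ≤ 4/2^p := by
    intro w
    have hcs : ∀ j : ℕ, CauchySeq (fun p => (w.1 p : Iinf) j) := by
      intro j
      apply cauchySeq_of_le_geometric (1/2 : ℝ) (2^(j+2)) (by norm_num)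
      intro p
      have hd : dist ((w.1 p : Iinf) j) ((w.1 (p+1) : Iinf) j)
          = |(((w.1 p : Iinf) j : ℝ)) - ((w.1 (p+1) : Iinf) j : ℝ)| := by
        rw [Subtype.dist_eq, Real.dist_eq]
      rw [hd]
      have hc := coord_le_rho ((w.1 p : Iinf)) ((w.1 (p+1) : Iinf)) j
      have h1 := step1 w p
      have h2 := hpow_le p
      have hpos : (0:ℝ) < 2^(j+1) := by positivity
      have h5 : 2^(j+1) * rho ((w.1 p : Iinf)) ((w.1 (p+1) : Iinf)) ≤ 2^(j+1) * (2/2^p) :=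
        mul_le_mul_of_nonneg_left (le_trans (le_of_lt h1) h2) (le_of_lt hpos)
      have heq : (2:ℝ)^(j+2) * (1/2)^p = 2^(j+1) * (2/2^p) := by
        rw [one_div_pow]
        rw [pow_succ]
        ring
      rw [heq]
      linarith
    have hex : ∀ j, ∃ c : unitInterval, Tendsto (fun p => (w.1 p : Iinf) j) atTop (𝓝 c) :=
      fun j => cauchySeq_tendsto_of_complete (hcs j)
    choose lc hlc using hex
    have hlcR : ∀ j, Tendsto (fun p => (((w.1 p : Iinf) j : ℝ))) atTop (𝓝 ((lc j : ℝ))) :=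
      fun j => tendsto_subtype_rng.mp (hlc j)
    have htend : Tendsto (fun i => (w.1 i : Iinf)) atTop (𝓝 (lc : Iinf)) :=
      tendsto_pi_nhds.mpr hlc
    have hrb : ∀ p, rho (lc : Iinf) (w.1 p : Iinf) ≤ 4/2^p := by
      intro p
      rw [rho]
      apply Summable.tsum_le_of_sum_range_le (rho_summable _ _)
      intro n
      have hsq : Tendsto (fun q => ∑ i ∈ Finset.range n,
          |(((w.1 q : Iinf) i : ℝ)) - ((w.1 p : Iinf) i : ℝ)| / 2^(i+1)) atTop
          (𝓝 (∑ i ∈ Finset.range n, |((lc i : ℝ)) - ((w.1 p : Iinf) i : ℝ)| / 2^(i+1))) := by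
        apply tendsto_finset_sum
        intro i _
        exact (((hlcR i).sub_const _).abs).div_const _
      refine le_of_tendsto hsq ?_
      filter_upwards [eventually_ge_atTop p] with q hq
      have hsum : ∑ i ∈ Finset.range n,
          |(((w.1 q : Iinf) i : ℝ)) - ((w.1 p : Iinf) i : ℝ)| / 2^(i+1)
          ≤ rho (w.1 q : Iinf) (w.1 p : Iinf) := by
        rw [rho]
        exact Summable.sum_le_tsum _ (fun i _ => rho_term_nonneg _ _ i) (rho_summable _ _)
      have hb2 : rho (w.1 q : Iinf) (w.1 p : Iinf) ≤ 4/2^p := by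
        rw [rho_symm]; exact step3 w p q hq
      linarith
    have hx : ∀ p : ℕ, ∃ x ∈ X, rho (w.1 p : Iinf) x < η p := fun p => hMX p ((w.1 p).2)
    choose xs hxsX hxs using hx
    have hxdist : ∀ p, rho (xs p) (lc : Iinf) ≤ η p + 4/2^p := by
      intro p
      have ht := rho_triangle (xs p) (w.1 p : Iinf) (lc : Iinf)
      have h1 : rho (xs p) (w.1 p : Iinf) < η p := by rw [rho_symm]; exact hxs p
      have h2 : rho (w.1 p : Iinf) (lc : Iinf) ≤ 4/2^p := by rw [rho_symm]; exact hrb p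
      linarith
    have hbound0 : Tendsto (fun p => η p + 4/2^p) atTop (𝓝 0) := by
      simpa using hη0.add h4pow
    have hxs_tend : Tendsto xs atTop (𝓝 (lc : Iinf)) := by
      rw [tendsto_pi_nhds]
      intro j
      rw [tendsto_subtype_rng]
      have hb : ∀ p, |((xs p j : ℝ)) - ((lc j : ℝ))| ≤ 2^(j+1) * (η p + 4/2^p) := by
        intro p
        calc |((xs p j : ℝ)) - ((lc j : ℝ))| ≤ 2^(j+1) * rho (xs p) (lc : Iinf) :=
              coord_le_rho _ _ j
          _ ≤ 2^(j+1) * (η p + 4/2^p) :=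
              mul_le_mul_of_nonneg_left (hxdist p) (by positivity)
      have habs : Tendsto (fun p => |((xs p j : ℝ)) - ((lc j : ℝ))|) atTop (𝓝 0) := by
        apply squeeze_zero (fun p => abs_nonneg _) hb
        simpa using hbound0.const_mul ((2:ℝ)^(j+1))
      rw [tendsto_iff_dist_tendsto_zero]
      simpa [Real.dist_eq] using habs
    have hmem : (lc : Iinf) ∈ X :=
      hXc.isClosed.mem_of_tendsto hxs_tend (Eventually.of_forall hxsX)
    exact ⟨lc, hmem, htend, hrb⟩
  constructor
  · intro w
    refine ⟨step1 w, ?_, ?_⟩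
    · intro ε hε
      obtain ⟨N, hN⟩ := exists_pow_lt_of_lt_one (div_pos hε (by norm_num : (0:ℝ) < 4))
        (by norm_num : (1/2:ℝ) < 1)
      refine ⟨N, fun p hp q hq => ?_⟩
      have key4 : ∀ p q : ℕ, p ≤ q → N ≤ p → rho (w.1 p : Iinf) (w.1 q : Iinf) < ε := by
        intro p q hpq hNp
        have h1 := step3 w p q hpq
        have h2 : (4:ℝ)/2^p ≤ 4/2^N := by gcongr <;> norm_num
        have h3 : (4:ℝ)/2^N < ε := by
          have h5 : (1/2:ℝ)^N = 1/2^N := one_div_pow _ _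
          rw [h5] at hN
          have h6 : (0:ℝ) < 2^N := by positivity
          rw [div_lt_iff₀ h6] at hN ⊢
          linarith [hN]
        linarith
      rcases le_total p q with hc | hc
      · exact key4 p q hc hp
      · rw [rho_symm]; exact key4 q p hc hq
    · obtain ⟨l, hlX, hlt, _⟩ := key w
      exact ⟨l, hlX, hlt⟩
  · choose π h1 h2 h3 using key
    refine ⟨π, ?_, h2, h1⟩
    apply continuous_pi
    intro j
    rw [continuous_induced_rng]
    have hFc : ∀ p : ℕ, Continuous
        (fun w : {a : ∀ i, M i // ∀ i, h i (a (i + 1)) = (a i : Iinf)} =>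
          (((w.1 p : Iinf)) j : ℝ)) := by
      intro p
      exact continuous_subtype_val.comp ((continuous_apply j).comp
        (continuous_subtype_val.comp ((continuous_apply p).comp continuous_subtype_val)))
    have hU : TendstoUniformly
        (fun p (w : {a : ∀ i, M i // ∀ i, h i (a (i + 1)) = (a i : Iinf)}) =>
          (((w.1 p : Iinf)) j : ℝ))
        (fun w => ((π w j : ℝ))) atTop := by
      rw [Metric.tendstoUniformly_iff]
      intro ε hε
      have hb : Tendsto (fun p : ℕ => (2:ℝ)^(j+1) * (4/2^p)) atTop (𝓝 0) := by
        simpa using h4pow.const_mul ((2:ℝ)^(j+1))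
      filter_upwards [hb.eventually_lt_const hε] with p hp
      intro w
      rw [Real.dist_eq]
      have hc := coord_le_rho (π w) ((w.1 p : Iinf)) j
      have h5 := h3 w p
      have h6 : 2^(j+1) * rho (π w) ((w.1 p : Iinf)) ≤ 2^(j+1) * (4/2^p) :=
        mul_le_mul_of_nonneg_left h5 (by positivity)
      calc |((π w j : ℝ)) - (((w.1 p : Iinf)) j : ℝ)|
          ≤ 2^(j+1) * rho (π w) ((w.1 p : Iinf)) := hc
        _ ≤ 2^(j+1) * (4/2^p) := h6
        _ < ε := hp
    exact hU.continuous (Frequently.of_forall hFc)
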